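/- Let $\nu:(0,\infty)\to(0,\infty)$ satisfy conditions (H1) with constant $a_1$. Let $w\in\mathbb{R}^d$, $r\in(0,2]$, $B = B(w,r)$, and let $f:\mathbb{R}^d\to[0,\infty)$ be measurable with $\int_{\mathbb{R}^d} f(y)(\nu(|y|)\wedge 1)\,dy < \infty$. Define $g(y) = \int_{B^c} f(z)\nu(|y-z|)\,dz$ for $y\in B$. Then there is a constant $c = c(a_1)$ such that for all $y \in B(w,r/2)$: $|g(y)-g(w)| \le c\,\frac{(g(w)\wedge g(y))\,|y-w|}{r}$, and in particular $g(w) \le c\, g(y)$. -/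

import Mathlib

open MeasureTheory Set Metric

lemma nu'_integrableOn (ν ν' : ℝ → ℝ)
    (hpos : ∀ r > (0:ℝ), 0 < ν r)
    (habs : ∀ r > (0:ℝ), ν r = -∫ ρ in Set.Ioi r, ν' ρ) :
    ∀ r > (0:ℝ), IntegrableOn ν' (Set.Ioi r) := by
  intro r hr
  by_contra h
  have h2 := habs r hr
  rw [MeasureTheory.integral_undef h] at h2
  simp only [neg_zero] at h2
  exact absurd h2 (ne_of_gt (hpos r hr))

lemma nu'_nonpos (ν ν' : ℝ → ℝ)
    (hpos : ∀ r > (0:ℝ), 0 < ν r)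
    (habs : ∀ r > (0:ℝ), ν r = -∫ ρ in Set.Ioi r, ν' ρ)
    (hratio : ∀ u v : ℝ, 0 < u → u ≤ v → -ν' v / v ≤ -ν' u / u) :
    ∀ σ > (0:ℝ), ν' σ ≤ 0 := by
  intro σ hσ
  by_contra h
  push_neg at h
  have hint := nu'_integrableOn ν ν' hpos habs σ hσ
  have hconst : IntegrableOn (fun _ : ℝ => ν' σ) (Set.Ioi σ) := by
    refine hint.mono' aestronglyMeasurable_const ?_
    rw [ae_restrict_iff' measurableSet_Ioi]
    filter_upwards with ρ hρ
    have hρσ : σ ≤ ρ := le_of_lt hρ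
    have h0ρ : 0 < ρ := lt_trans hσ hρ
    have hr := hratio σ ρ hσ hρσ
    rw [div_le_div_iff₀ h0ρ hσ] at hr
    rw [Real.norm_eq_abs, abs_of_pos h]
    nlinarith [mul_nonneg h.le (sub_nonneg.mpr hρσ)]
  rcases (integrable_const_iff).mp hconst with h0 | hfin
  · exact absurd h0 (ne_of_gt h)
  · have hfin := hfin.measure_univ_lt_top
    rw [Measure.restrict_apply_univ, Real.volume_Ioi] at hfin
    exact absurd hfin (lt_irrefl _)

lemma nu_sub_eq (ν ν' : ℝ → ℝ)
    (hpos : ∀ r > (0:ℝ), 0 < ν r)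
    (habs : ∀ r > (0:ℝ), ν r = -∫ ρ in Set.Ioi r, ν' ρ)
    {a b : ℝ} (ha : 0 < a) (hab : a ≤ b) :
    ν a - ν b = ∫ ρ in Set.Ioc a b, (-ν' ρ) := by
  have hb : 0 < b := lt_of_lt_of_le ha hab
  have h1 := habs a ha
  have h2 := habs b hb
  have hIoc : IntegrableOn ν' (Set.Ioc a b) :=
    (nu'_integrableOn ν ν' hpos habs a ha).mono_set Set.Ioc_subset_Ioi_self
  have hIoi : IntegrableOn ν' (Set.Ioi b) := nu'_integrableOn ν ν' hpos habs b hb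
  have hd : Disjoint (Set.Ioc a b) (Set.Ioi b) := by
    apply Set.disjoint_left.mpr
    intro x hx hx2
    exact absurd hx.2 (not_le.mpr hx2)
  have hu := MeasureTheory.setIntegral_union hd measurableSet_Ioi hIoc hIoi
  rw [Set.Ioc_union_Ioi_eq_Ioi hab] at hu
  rw [h1, h2, hu, integral_neg]
  ring



lemma nu_comp1 (ν : ℝ → ℝ) (a₁ : ℝ) (ha₁ : 1 ≤ a₁)
    (hpos : ∀ r > (0:ℝ), 0 < ν r)
    (hanti : ∀ u v : ℝ, 0 < u → u ≤ v → ν v ≤ ν u)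
    (hdbl1 : ∀ r : ℝ, 1 ≤ r → ν r ≤ a₁ * ν (r + 1))
    (hdbl2 : ∀ r : ℝ, 0 < r → r ≤ 1 → ν r ≤ a₁ * ν (2 * r))
    {r u v : ℝ} (hr : 0 < r) (hr2 : r ≤ 2) (hu : r/2 ≤ u) (huv : u ≤ v)
    (hv : v ≤ u + r/2) :
    ν u ≤ a₁ * ν v := by
  have hu0 : 0 < u := lt_of_lt_of_le (by linarith) hu
  have hv0 : 0 < v := lt_of_lt_of_le hu0 huv
  rcases le_or_gt u 1 with h1 | h1
  · have h2u : v ≤ 2*u := by linarith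
    have hA := hdbl2 u hu0 h1
    have h3 : ν (2*u) ≤ ν v := hanti v (2*u) hv0 h2u
    nlinarith
  · have hA := hdbl1 u h1.le
    have h3 : ν (u+1) ≤ ν v := hanti v (u+1) hv0 (by linarith)
    nlinarith

lemma nu_lip (ν ν' : ℝ → ℝ) (a₁ : ℝ) (ha₁ : 1 ≤ a₁)
    (hpos : ∀ r > (0:ℝ), 0 < ν r)
    (hanti : ∀ u v : ℝ, 0 < u → u ≤ v → ν v ≤ ν u)
    (habs : ∀ r > (0:ℝ), ν r = -∫ ρ in Set.Ioi r, ν' ρ)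
    (hratio : ∀ u v : ℝ, 0 < u → u ≤ v → -ν' v / v ≤ -ν' u / u)
    (hdbl1 : ∀ r : ℝ, 1 ≤ r → ν r ≤ a₁ * ν (r + 1))
    (hdbl2 : ∀ r : ℝ, 0 < r → r ≤ 1 → ν r ≤ a₁ * ν (2 * r))
    {r u v : ℝ} (hr : 0 < r) (hr2 : r ≤ 2) (hu : r/2 ≤ u) (huv : u ≤ v)
    (hv : v ≤ u + r/2) :
    ν u - ν v ≤ 16*a₁^2/r * (v - u) * ν v := by
  set h := min (u/2) 1 with hh
  have hu0 : 0 < u := lt_of_lt_of_le (by linarith) hu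
  have hv0 : 0 < v := lt_of_lt_of_le hu0 huv
  have hh0 : 0 < h := lt_min (by linarith) one_pos
  have hhu : h ≤ u/2 := min_le_left _ _
  have huh0 : 0 < u - h := by linarith
  set I := ∫ σ in Set.Ioc (u-h) u, (-ν' σ) with hIdef
  have hIeq : ν (u-h) - ν u = I := nu_sub_eq ν ν' hpos habs huh0 (by linarith)
  have hIntIoi : IntegrableOn ν' (Set.Ioi (u-h)) :=
    nu'_integrableOn ν ν' hpos habs (u-h) huh0
  have hInn : IntegrableOn (fun σ => -ν' σ) (Set.Ioc (u-h) u) :=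
    (hIntIoi.mono_set Set.Ioc_subset_Ioi_self).neg
  -- pointwise bound on (u, v]
  have key : ∀ ρ ∈ Set.Ioc u v, -ν' ρ ≤ 4/h * I := by
    intro ρ hρ
    have hρ0 : 0 < ρ := lt_trans hu0 hρ.1
    have hb : ∀ σ ∈ Set.Ioc (u-h) u, -ν' ρ ≤ 4 * (-ν' σ) := by
      intro σ hσ
      have hσ0 : 0 < σ := lt_trans huh0 hσ.1
      have hσρ : σ ≤ ρ := le_trans hσ.2 hρ.1.le
      have hrr := hratio σ ρ hσ0 hσρ
      have hρ4σ : ρ ≤ 4*σ := by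
        rcases le_or_gt u 2 with h2 | h2
        · have hhv : h = u/2 := min_eq_left (by linarith)
          have := hσ.1
          rw [hhv] at this
          have hρv : ρ ≤ v := hρ.2
          linarith
        · have hhv : h = 1 := min_eq_right (by linarith)
          have := hσ.1
          rw [hhv] at this
          have hρv : ρ ≤ v := hρ.2
          linarith
      have hsign : 0 ≤ -ν' σ := by
        have := nu'_nonpos ν ν' hpos habs hratio σ hσ0
        linarith
      have h1 : -ν' ρ ≤ ρ * (-ν' σ / σ) := by
        calc -ν' ρ = ρ * (-ν' ρ / ρ) := by field_simp
        _ ≤ ρ * (-ν' σ / σ) := mul_le_mul_of_nonneg_left hrr hρ0.le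
      calc -ν' ρ ≤ ρ * (-ν' σ / σ) := h1
        _ ≤ 4*σ * (-ν' σ / σ) :=
            mul_le_mul_of_nonneg_right hρ4σ (div_nonneg hsign hσ0.le)
        _ = 4 * (-ν' σ) := by field_simp
    have hconst : IntegrableOn (fun _ : ℝ => -ν' ρ) (Set.Ioc (u-h) u) :=
      integrableOn_const (by rw [Real.volume_Ioc]; exact ENNReal.ofReal_ne_top)
    have hmono := setIntegral_mono_on hconst (hInn.const_mul 4) measurableSet_Ioc hb
    rw [setIntegral_const, Real.volume_real_Ioc_of_le (by linarith),
      show u - (u - h) = h by ring, smul_eq_mul, MeasureTheory.integral_const_mul] at hmono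
    rw [div_mul_eq_mul_div, le_div_iff₀ hh0]
    linarith
  -- integrate over (u, v]
  have step2 : ν u - ν v ≤ (v - u) * (4/h * I) := by
    rw [nu_sub_eq ν ν' hpos habs hu0 huv]
    have hInn2 : IntegrableOn (fun σ => -ν' σ) (Set.Ioc u v) :=
      ((nu'_integrableOn ν ν' hpos habs u hu0).mono_set Set.Ioc_subset_Ioi_self).neg
    have hconst : IntegrableOn (fun _ : ℝ => 4/h * I) (Set.Ioc u v) :=
      integrableOn_const (by rw [Real.volume_Ioc]; exact ENNReal.ofReal_ne_top)
    have hmono := setIntegral_mono_on hInn2 hconst measurableSet_Ioc key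
    rw [setIntegral_const, Real.volume_real_Ioc_of_le (by linarith),
      smul_eq_mul] at hmono
    linarith
  have hI0 : 0 ≤ I := by
    rw [← hIeq]
    have := hanti (u-h) u huh0 (by linarith)
    linarith
  have hIle : I ≤ a₁^2 * ν v := by
    rw [← hIeq]
    have h1 : ν (u - h) ≤ a₁ * ν u := by
      rcases le_or_gt u 2 with h2 | h2
      · have hhv : h = u/2 := min_eq_left (by linarith)
        rw [hhv, show u - u/2 = u/2 by ring]
        have := hdbl2 (u/2) (by linarith) (by linarith)
        rwa [show 2*(u/2) = u by ring] at this
      · have hhv : h = 1 := min_eq_right (by linarith)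
        rw [hhv]
        have := hdbl1 (u-1) (by linarith)
        rwa [show u - 1 + 1 = u by ring] at this
    have h2 : ν u ≤ a₁ * ν v := nu_comp1 ν a₁ ha₁ hpos hanti hdbl1 hdbl2 hr hr2 hu huv hv
    have h3 : 0 < ν u := hpos u hu0
    have h4 : 0 < ν v := hpos v hv0
    nlinarith
  have h4h : 4/h ≤ 16/r := by
    rw [div_le_div_iff₀ hh0 hr]
    have : r/4 ≤ h := le_min (by linarith) (by linarith)
    nlinarith
  have hνv : 0 < ν v := hpos v hv0
  calc ν u - ν v ≤ (v - u) * (4/h * I) := step2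
    _ ≤ (v - u) * (4/h * (a₁^2 * ν v)) := by
        apply mul_le_mul_of_nonneg_left _ (by linarith)
        exact mul_le_mul_of_nonneg_left hIle (by positivity)
    _ ≤ (v - u) * (16/r * (a₁^2 * ν v)) := by
        apply mul_le_mul_of_nonneg_left _ (by linarith)
        exact mul_le_mul_of_nonneg_right h4h (by positivity)
    _ = 16*a₁^2/r * (v - u) * ν v := by ring



lemma nu_key_pair (ν ν' : ℝ → ℝ) (a₁ : ℝ) (ha₁ : 1 ≤ a₁)
    (hpos : ∀ r > (0:ℝ), 0 < ν r)
    (hanti : ∀ u v : ℝ, 0 < u → u ≤ v → ν v ≤ ν u)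
    (habs : ∀ r > (0:ℝ), ν r = -∫ ρ in Set.Ioi r, ν' ρ)
    (hratio : ∀ u v : ℝ, 0 < u → u ≤ v → -ν' v / v ≤ -ν' u / u)
    (hdbl1 : ∀ r : ℝ, 1 ≤ r → ν r ≤ a₁ * ν (r + 1))
    (hdbl2 : ∀ r : ℝ, 0 < r → r ≤ 1 → ν r ≤ a₁ * ν (2 * r))
    {r s t : ℝ} (hr : 0 < r) (hr2 : r ≤ 2) (hs : r/2 ≤ s) (ht : r/2 ≤ t)
    (hst : |s - t| ≤ r/2) :
    ν t ≤ a₁ * ν s ∧ |ν t - ν s| ≤ 16*a₁^2/r * |t - s| * min (ν s) (ν t) := by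
  have hs0 : 0 < s := lt_of_lt_of_le (by linarith) hs
  have ht0 : 0 < t := lt_of_lt_of_le (by linarith) ht
  rcases le_total s t with hle | hle
  · -- s ≤ t
    have hts : t ≤ s + r/2 := by
      rw [abs_sub_comm, abs_of_nonneg (by linarith)] at hst; linarith
    have hlip := nu_lip ν ν' a₁ ha₁ hpos hanti habs hratio hdbl1 hdbl2 hr hr2 hs hle hts
    have hmono : ν t ≤ ν s := hanti s t hs0 hle
    constructor
    · nlinarith [hpos s hs0]
    · rw [abs_sub_comm, abs_of_nonneg (by linarith : (0:ℝ) ≤ ν s - ν t),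
        abs_of_nonneg (by linarith : (0:ℝ) ≤ t - s), min_eq_right hmono]
      exact hlip
  · -- t ≤ s
    have hts : s ≤ t + r/2 := by
      rw [abs_of_nonneg (by linarith)] at hst; linarith
    have hlip := nu_lip ν ν' a₁ ha₁ hpos hanti habs hratio hdbl1 hdbl2 hr hr2 ht hle hts
    have hmono : ν s ≤ ν t := hanti t s ht0 hle
    constructor
    · exact nu_comp1 ν a₁ ha₁ hpos hanti hdbl1 hdbl2 hr hr2 ht hle hts
    · rw [abs_of_nonneg (by linarith : (0:ℝ) ≤ ν t - ν s),
        abs_of_nonpos (by linarith : t - s ≤ 0), min_eq_left hmono, neg_sub]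
      exact hlip

lemma nu_tilde_meas (ν : ℝ → ℝ)
    (hanti : ∀ u v : ℝ, 0 < u → u ≤ v → ν v ≤ ν u)
    {ε : ℝ} (hε : 0 < ε) : Measurable (fun x : ℝ => ν (max x ε)) := by
  have : Antitone (fun x : ℝ => ν (max x ε)) := by
    intro a b hab
    exact hanti (max a ε) (max b ε) (lt_of_lt_of_le hε (le_max_right _ _))
      (max_le_max hab le_rfl)
  exact this.measurable

theorem lipschitz_bound_for_g
    {d : ℕ} (hd : 1 ≤ d)
    (ν ν' : ℝ → ℝ) (a₁ : ℝ) (ha₁ : 1 ≤ a₁)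
    (hpos : ∀ r > (0:ℝ), 0 < ν r)
    (hanti : ∀ u v : ℝ, 0 < u → u ≤ v → ν v ≤ ν u)
    (habs : ∀ r > (0:ℝ), ν r = -∫ ρ in Set.Ioi r, ν' ρ)
    (hratio : ∀ u v : ℝ, 0 < u → u ≤ v → -ν' v / v ≤ -ν' u / u)
    (hdbl1 : ∀ r : ℝ, 1 ≤ r → ν r ≤ a₁ * ν (r + 1))
    (hdbl2 : ∀ r : ℝ, 0 < r → r ≤ 1 → ν r ≤ a₁ * ν (2 * r)) :
    ∃ c > (0:ℝ), ∀ (w : EuclideanSpace ℝ (Fin d)) (r : ℝ), 0 < r → r ≤ 2 →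
      ∀ f : EuclideanSpace ℝ (Fin d) → ℝ, Measurable f → (∀ x, 0 ≤ f x) →
      Integrable (fun y => f y * min (ν ‖y‖) 1) →
      ∀ g : EuclideanSpace ℝ (Fin d) → ℝ,
        (∀ y ∈ ball w r, g y = ∫ z in (ball w r)ᶜ, f z * ν ‖y - z‖) →
        ∀ y ∈ ball w (r / 2),
          |g y - g w| ≤ c * (min (g w) (g y)) * ‖y - w‖ / r ∧ g w ≤ c * g y := by
  refine ⟨16*a₁^2 + 1, by nlinarith, ?_⟩
  intro w r hr hr2 f hfm hf0 _hfint g hg y hy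
  have hBmeas : MeasurableSet ((ball w r)ᶜ : Set (EuclideanSpace ℝ (Fin d))) :=
    measurableSet_ball.compl
  have hyw : ‖y - w‖ < r/2 := by
    have := mem_ball.mp hy; rwa [dist_eq_norm] at this
  have hyw0 : (0:ℝ) ≤ ‖y - w‖ := norm_nonneg _
  have hyB : y ∈ ball w r := by
    rw [mem_ball, dist_eq_norm]; linarith
  have hwB : w ∈ ball w r := mem_ball_self hr
  -- basic distance facts for z in the complement
  have hdist : ∀ z ∈ ((ball w r)ᶜ : Set (EuclideanSpace ℝ (Fin d))),
      r ≤ ‖w - z‖ ∧ r/2 ≤ ‖y - z‖ ∧ |‖w - z‖ - ‖y - z‖| ≤ r/2 ∧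
        |‖y - z‖ - ‖w - z‖| ≤ ‖y - w‖ := by
    intro z hz
    have h1 : r ≤ ‖w - z‖ := by
      have := (Set.mem_compl_iff _ _).mp hz
      rw [mem_ball, dist_comm, dist_eq_norm] at this
      linarith [not_lt.mp this]
    have h2 : |‖y - z‖ - ‖w - z‖| ≤ ‖y - w‖ := by
      have := abs_norm_sub_norm_le (y - z) (w - z)
      rwa [sub_sub_sub_cancel_right] at this
    have h2' : |‖y - z‖ - ‖w - z‖| ≤ r/2 := le_trans h2 (le_of_lt hyw)
    have h3 : r/2 ≤ ‖y - z‖ := by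
      have := abs_le.mp h2'
      linarith [this.1]
    exact ⟨h1, h3, by rwa [abs_sub_comm] at h2', h2⟩
  -- pointwise key facts
  have hkey : ∀ z ∈ ((ball w r)ᶜ : Set (EuclideanSpace ℝ (Fin d))),
      (ν ‖y - z‖ ≤ a₁ * ν ‖w - z‖ ∧ ν ‖w - z‖ ≤ a₁ * ν ‖y - z‖) ∧
      |ν ‖y - z‖ - ν ‖w - z‖| ≤
        16*a₁^2/r * ‖y - w‖ * min (ν ‖w - z‖) (ν ‖y - z‖) := by
    intro z hz
    obtain ⟨h1, h3, h4, h2⟩ := hdist z hz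
    have hs : r/2 ≤ ‖w - z‖ := by linarith
    have hk1 := nu_key_pair ν ν' a₁ ha₁ hpos hanti habs hratio hdbl1 hdbl2
      hr hr2 hs h3 h4
    have hk2 := nu_key_pair ν ν' a₁ ha₁ hpos hanti habs hratio hdbl1 hdbl2
      hr hr2 h3 hs (by rwa [abs_sub_comm] at h4)
    refine ⟨⟨hk1.1, hk2.1⟩, le_trans hk1.2 ?_⟩
    have hmin0 : 0 ≤ min (ν ‖w - z‖) (ν ‖y - z‖) :=
      le_min (hpos _ (by linarith)).le (hpos _ (by linarith)).le
    have hc0 : (0:ℝ) ≤ 16*a₁^2/r := by positivity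
    have : 16*a₁^2/r * |‖y - z‖ - ‖w - z‖| ≤ 16*a₁^2/r * ‖y - w‖ :=
      mul_le_mul_of_nonneg_left h2 hc0
    exact mul_le_mul_of_nonneg_right this hmin0
  -- measurability helper
  have haesm : ∀ p : EuclideanSpace ℝ (Fin d),
      AEStronglyMeasurable (fun z => f z * ν (max ‖p - z‖ (r/4))) (volume.restrict ((ball w r)ᶜ)) := by
    intro p
    have hm : Measurable (fun z : EuclideanSpace ℝ (Fin d) => f z * ν (max ‖p - z‖ (r/4))) :=
      hfm.mul ((nu_tilde_meas ν hanti (by linarith : (0:ℝ) < r/4)).comp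
        ((continuous_const.sub continuous_id).norm.measurable))
    exact hm.aestronglyMeasurable
  have haesm' : ∀ p : EuclideanSpace ℝ (Fin d), (∀ z ∈ ((ball w r)ᶜ : Set (EuclideanSpace ℝ (Fin d))), r/4 ≤ ‖p - z‖) →
      AEStronglyMeasurable (fun z => f z * ν ‖p - z‖) (volume.restrict ((ball w r)ᶜ)) := by
    intro p hp
    refine (haesm p).congr ?_
    rw [Filter.EventuallyEq, ae_restrict_iff' hBmeas]
    filter_upwards with z hz
    rw [max_eq_left (hp z hz)]
  have hwB4 : ∀ z ∈ ((ball w r)ᶜ : Set (EuclideanSpace ℝ (Fin d))), r/4 ≤ ‖w - z‖ := by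
    intro z hz; have := (hdist z hz).1; linarith
  have hyB4 : ∀ z ∈ ((ball w r)ᶜ : Set (EuclideanSpace ℝ (Fin d))), r/4 ≤ ‖y - z‖ := by
    intro z hz; have := (hdist z hz).2.1; linarith
  have hgw : g w = ∫ z in (ball w r)ᶜ, f z * ν ‖w - z‖ := hg w hwB
  have hgy : g y = ∫ z in (ball w r)ᶜ, f z * ν ‖y - z‖ := hg y hyB
  by_cases hIw : Integrable (fun z => f z * ν ‖w - z‖) (volume.restrict ((ball w r)ᶜ))
  · -- main case
    have hIy : Integrable (fun z => f z * ν ‖y - z‖) (volume.restrict ((ball w r)ᶜ)) := by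
      refine (hIw.const_mul a₁).mono' (haesm' y hyB4) ?_
      filter_upwards [ae_restrict_mem hBmeas] with z hz
      have hk := (hkey z hz).1.1
      have hν : 0 < ν ‖y - z‖ := hpos _ (by linarith [(hdist z hz).2.1])
      rw [Real.norm_eq_abs, abs_of_nonneg (mul_nonneg (hf0 z) hν.le)]
      calc f z * ν ‖y - z‖ ≤ f z * (a₁ * ν ‖w - z‖) :=
            mul_le_mul_of_nonneg_left hk (hf0 z)
        _ = a₁ * (f z * ν ‖w - z‖) := by ring
    have hgw0 : 0 ≤ g w := by
      rw [hgw]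
      refine setIntegral_nonneg hBmeas fun z hz => ?_
      exact mul_nonneg (hf0 z) (hpos _ (by linarith [(hdist z hz).1])).le
    have hgy0 : 0 ≤ g y := by
      rw [hgy]
      refine setIntegral_nonneg hBmeas fun z hz => ?_
      exact mul_nonneg (hf0 z) (hpos _ (by linarith [(hdist z hz).2.1])).le
    set J := ∫ z in (ball w r)ᶜ, f z * min (ν ‖w - z‖) (ν ‖y - z‖) with hJdef
    have hImaesm : AEStronglyMeasurable
        (fun z => f z * min (ν ‖w - z‖) (ν ‖y - z‖)) (volume.restrict ((ball w r)ᶜ)) := by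
      have hm : Measurable (fun z : EuclideanSpace ℝ (Fin d) =>
          f z * min (ν (max ‖w - z‖ (r/4))) (ν (max ‖y - z‖ (r/4)))) := by
        refine hfm.mul (Measurable.min ?_ ?_)
        · exact (nu_tilde_meas ν hanti (by linarith : (0:ℝ) < r/4)).comp
            ((continuous_const.sub continuous_id).norm.measurable)
        · exact (nu_tilde_meas ν hanti (by linarith : (0:ℝ) < r/4)).comp
            ((continuous_const.sub continuous_id).norm.measurable)
      refine hm.aestronglyMeasurable.congr ?_
      rw [Filter.EventuallyEq, ae_restrict_iff' hBmeas]
      filter_upwards with z hz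
      rw [max_eq_left (hwB4 z hz), max_eq_left (hyB4 z hz)]
    have hIm : Integrable (fun z => f z * min (ν ‖w - z‖) (ν ‖y - z‖))
        (volume.restrict ((ball w r)ᶜ)) := by
      refine hIw.mono' hImaesm ?_
      filter_upwards [ae_restrict_mem hBmeas] with z hz
      have hmin0 : 0 ≤ min (ν ‖w - z‖) (ν ‖y - z‖) :=
        le_min (hpos _ (by linarith [(hdist z hz).1])).le
          (hpos _ (by linarith [(hdist z hz).2.1])).le
      rw [Real.norm_eq_abs, abs_of_nonneg (mul_nonneg (hf0 z) hmin0)]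
      exact mul_le_mul_of_nonneg_left (min_le_left _ _) (hf0 z)
    have hJw : J ≤ g w := by
      rw [hgw, hJdef]
      refine integral_mono_of_nonneg ?_ hIw ?_
      · filter_upwards [ae_restrict_mem hBmeas] with z hz
        exact mul_nonneg (hf0 z) (le_min (hpos _ (by linarith [(hdist z hz).1])).le
          (hpos _ (by linarith [(hdist z hz).2.1])).le)
      · filter_upwards [ae_restrict_mem hBmeas] with z _
        exact mul_le_mul_of_nonneg_left (min_le_left _ _) (hf0 z)
    have hJy : J ≤ g y := by
      rw [hgy, hJdef]
      refine integral_mono_of_nonneg ?_ hIy ?_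
      · filter_upwards [ae_restrict_mem hBmeas] with z hz
        exact mul_nonneg (hf0 z) (le_min (hpos _ (by linarith [(hdist z hz).1])).le
          (hpos _ (by linarith [(hdist z hz).2.1])).le)
      · filter_upwards [ae_restrict_mem hBmeas] with z _
        exact mul_le_mul_of_nonneg_left (min_le_right _ _) (hf0 z)
    have hJ0 : 0 ≤ J := by
      rw [hJdef]
      refine setIntegral_nonneg hBmeas fun z hz => ?_
      exact mul_nonneg (hf0 z) (le_min (hpos _ (by linarith [(hdist z hz).1])).le
        (hpos _ (by linarith [(hdist z hz).2.1])).le)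
    have hcJ : (0:ℝ) ≤ 16*a₁^2/r * ‖y - w‖ := by positivity
    have habsb : |g y - g w| ≤ 16*a₁^2/r * ‖y - w‖ * J := by
      rw [hgy, hgw, ← integral_sub hIy hIw]
      calc |∫ z in (ball w r)ᶜ, (f z * ν ‖y - z‖ - f z * ν ‖w - z‖)|
          ≤ ∫ z in (ball w r)ᶜ, |f z * ν ‖y - z‖ - f z * ν ‖w - z‖| := by
            have := MeasureTheory.norm_integral_le_integral_norm
              (μ := volume.restrict ((ball w r)ᶜ))
              (fun z => f z * ν ‖y - z‖ - f z * ν ‖w - z‖)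
            simpa [Real.norm_eq_abs] using this
        _ ≤ ∫ z in (ball w r)ᶜ,
              16*a₁^2/r * ‖y - w‖ * (f z * min (ν ‖w - z‖) (ν ‖y - z‖)) := by
            refine integral_mono_of_nonneg ?_ (hIm.const_mul _) ?_
            · filter_upwards [ae_restrict_mem hBmeas] with z _
              exact abs_nonneg _
            · filter_upwards [ae_restrict_mem hBmeas] with z hz
              have hk := (hkey z hz).2
              rw [show f z * ν ‖y - z‖ - f z * ν ‖w - z‖
                  = f z * (ν ‖y - z‖ - ν ‖w - z‖) by ring,
                abs_mul, abs_of_nonneg (hf0 z)]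
              calc f z * |ν ‖y - z‖ - ν ‖w - z‖|
                  ≤ f z * (16*a₁^2/r * ‖y - w‖ * min (ν ‖w - z‖) (ν ‖y - z‖)) :=
                    mul_le_mul_of_nonneg_left hk (hf0 z)
                _ = 16*a₁^2/r * ‖y - w‖ * (f z * min (ν ‖w - z‖) (ν ‖y - z‖)) := by ring
        _ = 16*a₁^2/r * ‖y - w‖ * J := by
            rw [hJdef, MeasureTheory.integral_const_mul]
    have hminJ : J ≤ min (g w) (g y) := le_min hJw hJy
    have hmin0 : 0 ≤ min (g w) (g y) := le_min hgw0 hgy0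
    constructor
    · calc |g y - g w| ≤ 16*a₁^2/r * ‖y - w‖ * J := habsb
        _ ≤ 16*a₁^2/r * ‖y - w‖ * min (g w) (g y) :=
            mul_le_mul_of_nonneg_left hminJ hcJ
        _ = 16*a₁^2 * min (g w) (g y) * ‖y - w‖ / r := by ring
        _ ≤ (16*a₁^2 + 1) * min (g w) (g y) * ‖y - w‖ / r := by
            have hnum : 16*a₁^2 * min (g w) (g y) * ‖y - w‖
                ≤ (16*a₁^2 + 1) * min (g w) (g y) * ‖y - w‖ := by
              nlinarith [mul_nonneg hmin0 hyw0]
            exact (div_le_div_iff_of_pos_right hr).mpr hnum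
    · have h1 : 16*a₁^2/r * ‖y - w‖ ≤ 8*a₁^2 := by
        rw [div_mul_eq_mul_div, div_le_iff₀ hr]
        nlinarith [sq_nonneg a₁]
      have h8 : 16*a₁^2/r * ‖y - w‖ * J ≤ 8*a₁^2 * g y :=
        calc 16*a₁^2/r * ‖y - w‖ * J ≤ 8*a₁^2 * J := mul_le_mul_of_nonneg_right h1 hJ0
          _ ≤ 8*a₁^2 * g y := mul_le_mul_of_nonneg_left hJy (by positivity)
      have h9 : g w - g y ≤ |g y - g w| := by
        rw [abs_sub_comm]; exact le_abs_self _
      nlinarith [mul_nonneg (sq_nonneg a₁) hgy0]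
  · -- degenerate case
    have hIy : ¬ Integrable (fun z => f z * ν ‖y - z‖) (volume.restrict ((ball w r)ᶜ)) := by
      intro hIy
      refine hIw ((hIy.const_mul a₁).mono' (haesm' w hwB4) ?_)
      filter_upwards [ae_restrict_mem hBmeas] with z hz
      have hk := (hkey z hz).1.2
      have hν : 0 < ν ‖w - z‖ := hpos _ (by linarith [(hdist z hz).1])
      rw [Real.norm_eq_abs, abs_of_nonneg (mul_nonneg (hf0 z) hν.le)]
      calc f z * ν ‖w - z‖ ≤ f z * (a₁ * ν ‖y - z‖) :=
            mul_le_mul_of_nonneg_left hk (hf0 z)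
        _ = a₁ * (f z * ν ‖y - z‖) := by ring
    rw [hgy, hgw, integral_undef hIy, integral_undef hIw]
    norm_num
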